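/- arXiv:2110.06454 — 8 statements merged into one kernel-verified Lean document; each statement's English description precedes it below -/
import Mathlib

section
/- (Mη-Theorem) Fix X₂ ≠ 0, let X₁ be such that the power input P_I = T·J₂·X₂ is nonzero in a neighborhood of X₁ and the efficiency η = −(J₁·X₁)/(J₂·X₂) satisfies 1 + η ≠ 0 at X₁. If the derivative of the function X₁ ↦ η(X₁, X₂) vanishes at X₁, then the driven flux satisfies J₁ = −((1 − η)/(1 + η))·L₁₁·X₁ at that point. -/
/-- The driven flux `J₁ = L₁₁·X₁ + q·√(L₁₁·L₂₂)·X₂`. -/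
noncomputable def fluxJ1 (L11 L22 q X2 X1 : ℝ) : ℝ :=
  L11 * X1 + q * Real.sqrt (L11 * L22) * X2

/-- The conjugate flux `J₂ = q·√(L₁₁·L₂₂)·X₁ + L₂₂·X₂`. -/
noncomputable def fluxJ2 (L11 L22 q X2 X1 : ℝ) : ℝ :=
  q * Real.sqrt (L11 * L22) * X1 + L22 * X2

/-- The power input `P_I(X₁, X₂) = T·J₂·X₂`. -/
noncomputable def powerIn (T L11 L22 q X2 X1 : ℝ) : ℝ :=
  T * (fluxJ2 L11 L22 q X2 X1 * X2)

/-- The efficiency `η = −(J₁·X₁)/(J₂·X₂)`. -/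
noncomputable def eff (L11 L22 q X2 X1 : ℝ) : ℝ :=
  -(fluxJ1 L11 L22 q X2 X1 * X1) / (fluxJ2 L11 L22 q X2 X1 * X2)

/-- (Mη-Theorem) Fix `X₂ ≠ 0`; if the power input is nonzero in a neighborhood of `X₁`,
`1 + η ≠ 0` at `X₁`, and the derivative of `X₁ ↦ η(X₁, X₂)` vanishes at `X₁`, then the
driven flux satisfies `J₁ = −((1 − η)/(1 + η))·L₁₁·X₁` there. -/
theorem Meta_theorem (T L11 L22 q X1 X2 : ℝ) (hT : 0 < T) (hL11 : 0 < L11) (hL22 : 0 < L22)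
    (hX2 : X2 ≠ 0)
    (hPI : ∀ᶠ y in nhds X1, powerIn T L11 L22 q X2 y ≠ 0)
    (heta : 1 + eff L11 L22 q X2 X1 ≠ 0)
    (hder : deriv (fun y : ℝ => eff L11 L22 q X2 y) X1 = 0) :
    fluxJ1 L11 L22 q X2 X1 =
      -((1 - eff L11 L22 q X2 X1) / (1 + eff L11 L22 q X2 X1)) * (L11 * X1) := by
  set a := q * Real.sqrt (L11 * L22) with ha
  -- denominator nonzero at X1
  have hD : fluxJ2 L11 L22 q X2 X1 * X2 ≠ 0 := by
    have h := hPI.self_of_nhds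
    unfold powerIn at h
    intro hz
    exact h (by rw [hz, mul_zero])
  -- derivative of numerator
  have h1 : HasDerivAt (fun y => fluxJ1 L11 L22 q X2 y) L11 X1 := by
    unfold fluxJ1
    simpa using ((hasDerivAt_id X1).const_mul L11).add_const (a * X2)
  have hN : HasDerivAt (fun y => -(fluxJ1 L11 L22 q X2 y * y))
      (-(L11 * X1 + fluxJ1 L11 L22 q X2 X1 * 1)) X1 :=
    (h1.mul (hasDerivAt_id X1)).neg
  -- derivative of denominator
  have hDen : HasDerivAt (fun y => fluxJ2 L11 L22 q X2 y * X2) (a * X2) X1 := by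
    unfold fluxJ2
    simpa using ((((hasDerivAt_id X1).const_mul a).add_const (L22 * X2)).mul_const X2)
  have hEta : HasDerivAt (fun y : ℝ => eff L11 L22 q X2 y)
      ((-(L11 * X1 + fluxJ1 L11 L22 q X2 X1 * 1) * (fluxJ2 L11 L22 q X2 X1 * X2)
        - -(fluxJ1 L11 L22 q X2 X1 * X1) * (a * X2)) / (fluxJ2 L11 L22 q X2 X1 * X2) ^ 2) X1 := by
    unfold eff
    exact hN.div hDen hD
  have hkey : -(L11 * X1 + fluxJ1 L11 L22 q X2 X1 * 1) * (fluxJ2 L11 L22 q X2 X1 * X2)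
        - -(fluxJ1 L11 L22 q X2 X1 * X1) * (a * X2) = 0 := by
    have := hEta.deriv
    rw [hder] at this
    have h2 := this.symm
    rw [div_eq_zero_iff] at h2
    rcases h2 with h2 | h2
    · exact h2
    · exact absurd h2 (pow_ne_zero 2 hD)
  have heta' : fluxJ2 L11 L22 q X2 X1 * X2 + -(fluxJ1 L11 L22 q X2 X1 * X1) ≠ 0 := by
    intro hz
    apply heta
    unfold eff
    field_simp [left_ne_zero_of_mul hD]
    linarith [hz]
  unfold eff
  field_simp [left_ne_zero_of_mul hD]
  unfold fluxJ1 fluxJ2 at hkey ⊢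
  ring_nf at hkey ⊢
  linarith [hkey]
end

section
/- (Mη-Corollary) Assume 0 < q < 1, X₂ > 0, X₁ < 0, the force ratio x = √(L₁₁/L₂₂)·X₁/X₂ satisfies q·x + 1 > 0, and the driven flux satisfies J₁ = −((1 − η)/(1 + η))·L₁₁·X₁ where η = −(J₁·X₁)/(J₂·X₂). Then x = −q/(1 + √(1 − q²)). -/
/-- (Mη-Corollary) If `0 < q < 1`, `X₂ > 0`, `X₁ < 0`, the force ratio
`x = √(L₁₁/L₂₂)·X₁/X₂` satisfies `q·x + 1 > 0`, and the driven flux satisfies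
`J₁ = −((1 − η)/(1 + η))·L₁₁·X₁`, then `x = −q/(1 + √(1 − q²))`. -/
theorem Meta_corollary (L11 L22 q X1 X2 : ℝ) (hL11 : 0 < L11) (hL22 : 0 < L22)
    (hq0 : 0 < q) (hq1 : q < 1) (hX2 : 0 < X2) (hX1 : X1 < 0)
    (hx : q * (Real.sqrt (L11 / L22) * X1 / X2) + 1 > 0)
    (hJ1 : fluxJ1 L11 L22 q X2 X1 =
      -((1 - eff L11 L22 q X2 X1) / (1 + eff L11 L22 q X2 X1)) * (L11 * X1)) :
    Real.sqrt (L11 / L22) * X1 / X2 = -q / (1 + Real.sqrt (1 - q ^ 2)) := by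
  have ha : (0:ℝ) < Real.sqrt L11 := Real.sqrt_pos.mpr hL11
  have hb : (0:ℝ) < Real.sqrt L22 := Real.sqrt_pos.mpr hL22
  set a := Real.sqrt L11 with hadef
  set b := Real.sqrt L22 with hbdef
  have ha2 : a ^ 2 = L11 := Real.sq_sqrt hL11.le
  have hb2 : b ^ 2 = L22 := Real.sq_sqrt hL22.le
  have hmul : Real.sqrt (L11 * L22) = a * b := Real.sqrt_mul hL11.le L22
  have hdivs : Real.sqrt (L11 / L22) = a / b := Real.sqrt_div hL11.le L22
  rw [hdivs] at hx ⊢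
  set x := a / b * X1 / X2 with hxdef
  have hX2' : X2 ≠ 0 := hX2.ne'
  have ha' : a ≠ 0 := ha.ne'
  have hb' : b ≠ 0 := hb.ne'
  have hqx : q * x + 1 ≠ 0 := hx.ne'
  have hX1e : X1 = x * b * X2 / a := by
    rw [hxdef]; field_simp
  have hJ1e : fluxJ1 L11 L22 q X2 X1 = a * b * X2 * (x + q) := by
    rw [fluxJ1, hmul, hX1e, ← ha2]; field_simp
  have hJ2e : fluxJ2 L11 L22 q X2 X1 = b ^ 2 * X2 * (q * x + 1) := by
    rw [fluxJ2, hmul, hX1e, ← hb2]; field_simp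
  have heff : eff L11 L22 q X2 X1 = -(x * (x + q)) / (q * x + 1) := by
    rw [eff, hJ1e, hJ2e, hX1e]; field_simp
  set e := eff L11 L22 q X2 X1 with hedef
  -- E2: e * (q*x+1) = -(x*(x+q))
  have E2 : e * (q * x + 1) = -(x * (x + q)) := by
    rw [heff]; exact div_mul_cancel₀ _ hqx
  rw [hJ1e, hX1e, ← ha2] at hJ1
  by_cases hD : 1 + e = 0
  · -- then RHS of hJ1 is 0, so x = -q, so e = 0, contradicting 1+e=0
    rw [hD, div_zero] at hJ1
    have hxq : x + q = 0 := by
      have habX2 : a * b * X2 ≠ 0 := by positivity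
      have : a * b * X2 * (x + q) = 0 := by rw [hJ1]; ring
      exact (mul_eq_zero.mp this).resolve_left habX2
    have he0 : e = 0 := by
      rw [heff, hxq]; simp
    rw [he0] at hD; norm_num at hD
  · -- main case
    have E1 : 2 * x + q + e * q = 0 := by
      have h := hJ1
      field_simp at h
      -- h should be a polynomial identity; derive E1
      have habX2 : (a ^ 2 * b * X2 : ℝ) ≠ 0 := by positivity
      have key1 : (x + q) * (1 + e) = -(1 - e) * x :=
        by linear_combination h
      linear_combination key1
    have key : q * x ^ 2 + 2 * x + q = 0 := by
      linear_combination (q * x + 1) * E1 - q * E2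
    have h1q2 : (0:ℝ) ≤ 1 - q ^ 2 := by nlinarith
    have h2 : (q * x + 1) ^ 2 = 1 - q ^ 2 := by linear_combination q * key
    have h3 : Real.sqrt (1 - q ^ 2) = q * x + 1 := by
      rw [← h2, Real.sqrt_sq hx.le]
    rw [h3]
    have hpos : (0:ℝ) < 1 + (q * x + 1) := by linarith
    rw [eq_div_iff hpos.ne']
    linear_combination key
end

section
/- (MEF-Theorem) Fix X₂ ≠ 0 and regard the ecological function E_F = P_O − Φ as a function of X₁ alone. Then the derivative of X₁ ↦ E_F(X₁, X₂) vanishes at a point X₁ if and only if the driven flux satisfies J₁ = −(1/3)·L₁₁·X₁ at that point. -/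
/-- The power output `P_O(X₁, X₂) = −T·J₁·X₁`. -/
noncomputable def powerOut (T L11 L22 q X2 X1 : ℝ) : ℝ :=
  -(T * (fluxJ1 L11 L22 q X2 X1 * X1))

/-- The dissipation function `Φ(X₁, X₂) = T·(J₁·X₁ + J₂·X₂)`. -/
noncomputable def dissip (T L11 L22 q X2 X1 : ℝ) : ℝ :=
  T * (fluxJ1 L11 L22 q X2 X1 * X1 + fluxJ2 L11 L22 q X2 X1 * X2)

/-- The ecological function `E_F = P_O − Φ`. -/
noncomputable def ecolF (T L11 L22 q X2 X1 : ℝ) : ℝ :=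
  powerOut T L11 L22 q X2 X1 - dissip T L11 L22 q X2 X1

/-- (MEF-Theorem) For fixed `X₂ ≠ 0`, the derivative of `X₁ ↦ E_F(X₁, X₂)` vanishes at `X₁`
iff the driven flux satisfies `J₁ = −(1/3)·L₁₁·X₁` there. -/
theorem MEF_theorem (T L11 L22 q X2 : ℝ) (hT : 0 < T) (hL11 : 0 < L11) (hL22 : 0 < L22)
    (hX2 : X2 ≠ 0) (X1 : ℝ) :
    deriv (fun y : ℝ => ecolF T L11 L22 q X2 y) X1 = 0 ↔
      fluxJ1 L11 L22 q X2 X1 = -(1 / 3) * (L11 * X1) := by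
  set c := q * Real.sqrt (L11 * L22) with hc
  have hfun : (fun y : ℝ => ecolF T L11 L22 q X2 y) =
      fun y : ℝ => -2 * T * L11 * y ^ 2 - 3 * T * c * X2 * y - T * L22 * X2 ^ 2 := by
    funext y
    simp only [ecolF, powerOut, dissip, fluxJ1, fluxJ2, ← hc]
    ring
  have hderiv : deriv (fun y : ℝ => ecolF T L11 L22 q X2 y) X1 =
      -4 * T * L11 * X1 - 3 * T * c * X2 := by
    rw [hfun]
    have h : HasDerivAt (fun y : ℝ => -2 * T * L11 * y ^ 2 - 3 * T * c * X2 * y - T * L22 * X2 ^ 2)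
        (-2 * T * L11 * (2 * X1) - 3 * T * c * X2) X1 := by
      have h1 : HasDerivAt (fun y : ℝ => y ^ 2) (2 * X1) X1 := by
        simpa using (hasDerivAt_pow 2 X1)
      have := ((h1.const_mul (-2 * T * L11)).sub ((hasDerivAt_id X1).const_mul
        (3 * T * c * X2))).sub_const (T * L22 * X2 ^ 2)
      simpa using this
    rw [h.deriv]; ring
  rw [hderiv]
  simp only [fluxJ1, ← hc]
  constructor
  · intro h
    have hT' := hT.ne'
    nlinarith [mul_pos hT hL11]
  · intro h
    nlinarith
end

section
/- (MΩ-Theorem) Let 0 ≤ q < 1 and let η_M = q²/(1 + √(1 − q²))² be the maximum efficiency. Fix X₂ ≠ 0 and regard the omega function Ω = 2·P_O − η_M·P_I as a function of X₁ alone. Then the derivative of X₁ ↦ Ω(X₁, X₂) vanishes at a point X₁ if and only if the driven flux satisfies J₁ = −((2 − η_M)/(2 + η_M))·L₁₁·X₁ at that point. -/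
/-- The maximum efficiency `η_M = q²/(1 + √(1 − q²))²`. -/
noncomputable def etaM (q : ℝ) : ℝ := q ^ 2 / (1 + Real.sqrt (1 - q ^ 2)) ^ 2

/-- The omega function `Ω = 2·P_O − η_M·P_I`. -/
noncomputable def omegaF (T L11 L22 q X2 X1 : ℝ) : ℝ :=
  2 * powerOut T L11 L22 q X2 X1 - etaM q * powerIn T L11 L22 q X2 X1

lemma quad_deriv (A B C X1 : ℝ) :
    deriv (fun y : ℝ => A * y ^ 2 + B * y + C) X1 = 2 * A * X1 + B := by
  have h : HasDerivAt (fun y : ℝ => A * y ^ 2 + B * y + C) (2 * A * X1 + B) X1 := by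
    have h1 : HasDerivAt (fun y : ℝ => A * y ^ 2) (A * (2 * X1)) X1 := by
      simpa using (hasDerivAt_pow 2 X1).const_mul A
    have h2 : HasDerivAt (fun y : ℝ => B * y) B X1 := by
      simpa using (hasDerivAt_id X1).const_mul B
    have this : HasDerivAt (fun y : ℝ => A * y ^ 2 + B * y + C) (A * (2 * X1) + B) X1 :=
      (h1.add h2).add_const C
    convert this using 1
    ring
  exact h.deriv

/-- (MΩ-Theorem) Let `0 ≤ q < 1`. For fixed `X₂ ≠ 0`, the derivative of `X₁ ↦ Ω(X₁, X₂)`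
vanishes at `X₁` iff the driven flux satisfies `J₁ = −((2 − η_M)/(2 + η_M))·L₁₁·X₁` there. -/
theorem MOmega_theorem (T L11 L22 q X2 : ℝ) (hT : 0 < T) (hL11 : 0 < L11) (hL22 : 0 < L22)
    (hq0 : 0 ≤ q) (hq1 : q < 1) (hX2 : X2 ≠ 0) (X1 : ℝ) :
    deriv (fun y : ℝ => omegaF T L11 L22 q X2 y) X1 = 0 ↔
      fluxJ1 L11 L22 q X2 X1 = -((2 - etaM q) / (2 + etaM q)) * (L11 * X1) := by
  set η := etaM q with hη
  set c := q * Real.sqrt (L11 * L22) with hc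
  have hηnn : 0 ≤ η := by
    have : 0 ≤ Real.sqrt (1 - q ^ 2) := Real.sqrt_nonneg _
    rw [hη, etaM]; positivity
  have hden : (2 : ℝ) + η ≠ 0 := by nlinarith
  have hfun : (fun y : ℝ => omegaF T L11 L22 q X2 y) =
      fun y : ℝ => (-2 * T * L11) * y ^ 2 + (-2 * T * c * X2 - η * T * c * X2) * y +
        (-(η * T * L22 * X2 ^ 2)) := by
    funext y
    simp only [omegaF, powerOut, powerIn, fluxJ1, fluxJ2, ← hη, ← hc]
    ring
  rw [hfun, quad_deriv]
  constructor
  · intro h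
    have hc2 : c * X2 = -4 * L11 * X1 / (2 + η) := by
      field_simp
      nlinarith [hT]
    simp only [fluxJ1, ← hc]
    rw [hc2]
    field_simp
    ring
  · intro h
    simp only [fluxJ1, ← hc] at h
    have hc2 : c * X2 = -4 * L11 * X1 / (2 + η) := by
      field_simp at h ⊢
      nlinarith
    have hc2' : (2 + η) * (c * X2) = -4 * L11 * X1 := by
      field_simp at hc2; linarith [hc2]
    linear_combination (-T) * hc2'
end

section
/- (MΩ-Corollary) Let 0 < q < 1, X₂ ≠ 0, and let η_M = q²/(1 + √(1 − q²))². If the driven flux satisfies J₁ = −((2 − η_M)/(2 + η_M))·L₁₁·X₁, then the force ratio x = √(L₁₁/L₂₂)·X₁/X₂ equals −q·(4 − q² + 4·√(1 − q²))/(4·(1 + √(1 − q²))²). -/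
/-- (MΩ-Corollary) Let `0 < q < 1`, `X₂ ≠ 0`. If the driven flux satisfies
`J₁ = −((2 − η_M)/(2 + η_M))·L₁₁·X₁`, then the force ratio `x = √(L₁₁/L₂₂)·X₁/X₂`
equals `−q·(4 − q² + 4·√(1 − q²))/(4·(1 + √(1 − q²))²)`. -/
theorem MOmega_corollary (T L11 L22 q X1 X2 : ℝ) (hT : 0 < T) (hL11 : 0 < L11)
    (hL22 : 0 < L22) (hq0 : 0 < q) (hq1 : q < 1) (hX2 : X2 ≠ 0)
    (hJ1 : fluxJ1 L11 L22 q X2 X1 = -((2 - etaM q) / (2 + etaM q)) * (L11 * X1)) :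
    Real.sqrt (L11 / L22) * X1 / X2 =
      -(q * (4 - q ^ 2 + 4 * Real.sqrt (1 - q ^ 2))) /
        (4 * (1 + Real.sqrt (1 - q ^ 2)) ^ 2) := by
  have hq2 : (0:ℝ) ≤ 1 - q ^ 2 := by nlinarith
  set s := Real.sqrt (1 - q ^ 2) with hsdef
  have hs2 : s ^ 2 = 1 - q ^ 2 := Real.sq_sqrt hq2
  have hs0 : 0 ≤ s := Real.sqrt_nonneg _
  have h1s : (0:ℝ) < 1 + s := by linarith
  have heta : 0 ≤ etaM q := by unfold etaM; positivity
  have heta2 : (0:ℝ) < 2 + etaM q := by linarith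
  have hA : 0 < Real.sqrt (L11 * L22) := Real.sqrt_pos.mpr (by positivity)
  have hsqrt : Real.sqrt (L11 / L22) * Real.sqrt (L11 * L22) = L11 := by
    rw [← Real.sqrt_mul (by positivity),
      show L11 / L22 * (L11 * L22) = L11 ^ 2 by field_simp,
      Real.sqrt_sq hL11.le]
  have hX1 : X1 = -(q * Real.sqrt (L11 * L22) * X2 * (2 + etaM q)) / (4 * L11) := by
    unfold fluxJ1 at hJ1
    field_simp at hJ1 ⊢
    nlinarith [hJ1]
  have hetav : etaM q = q ^ 2 / (1 + s) ^ 2 := rfl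
  rw [hX1, hetav]
  have hL : L11 ≠ 0 := hL11.ne'
  field_simp
  have ha : Real.sqrt L11 ^ 2 = L11 := Real.sq_sqrt hL11.le
  linear_combination (-(2*(1+s)^2+q^2)) * hsqrt - 2*L11 * hs2
end

section
/- (MPη-Theorem) Fix X₂ ≠ 0, let X₁ be such that the power input P_I = T·J₂·X₂ is nonzero in a neighborhood of X₁, the power output P_O = −T·J₁·X₁ is nonzero at X₁, and the efficiency η = −(J₁·X₁)/(J₂·X₂) satisfies 2 + η ≠ 0 at X₁. If the derivative of the efficient power X₁ ↦ P_η(X₁, X₂) = η·P_O vanishes at X₁, then the driven flux satisfies J₁ = −((2 − η)/(2 + η))·L₁₁·X₁ at that point. -/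
/-- The efficient power `P_η = η·P_O`. -/
noncomputable def effPower (T L11 L22 q X2 X1 : ℝ) : ℝ :=
  eff L11 L22 q X2 X1 * powerOut T L11 L22 q X2 X1

/-- (MPη-Theorem) Fix `X₂ ≠ 0`; if the power input is nonzero in a neighborhood of `X₁`,
the power output is nonzero at `X₁`, `2 + η ≠ 0` at `X₁`, and the derivative of the
efficient power `X₁ ↦ P_η(X₁, X₂)` vanishes at `X₁`, then the driven flux satisfies
`J₁ = −((2 − η)/(2 + η))·L₁₁·X₁` there. -/
theorem MPeta_theorem (T L11 L22 q X1 X2 : ℝ) (hT : 0 < T) (hL11 : 0 < L11) (hL22 : 0 < L22)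
    (hX2 : X2 ≠ 0)
    (hPI : ∀ᶠ y in nhds X1, powerIn T L11 L22 q X2 y ≠ 0)
    (hPO : powerOut T L11 L22 q X2 X1 ≠ 0)
    (heta : 2 + eff L11 L22 q X2 X1 ≠ 0)
    (hder : deriv (fun y : ℝ => effPower T L11 L22 q X2 y) X1 = 0) :
    fluxJ1 L11 L22 q X2 X1 =
      -((2 - eff L11 L22 q X2 X1) / (2 + eff L11 L22 q X2 X1)) * (L11 * X1) := by
  set c := q * Real.sqrt (L11 * L22) with hc
  have hT0 : T ≠ 0 := ne_of_gt hT
  -- denominator at X1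
  have hD0 : c * X2 * X1 + L22 * X2 ^ 2 ≠ 0 := by
    have := hPI.self_of_nhds
    simp only [powerIn, fluxJ2, ← hc] at this
    intro h; apply this
    rw [show (c * X1 + L22 * X2) * X2 = c * X2 * X1 + L22 * X2 ^ 2 by ring, h, mul_zero]
  -- numerator factor at X1
  have hN0 : fluxJ1 L11 L22 q X2 X1 * X1 ≠ 0 := by
    intro h; apply hPO; simp [powerOut, h]
  -- effPower as a quotient
  have hEq : (fun y : ℝ => effPower T L11 L22 q X2 y)
      = fun y : ℝ => T * (L11 * y ^ 2 + c * X2 * y) ^ 2 / (c * X2 * y + L22 * X2 ^ 2) := by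
    funext y
    rw [show c * X2 * y + L22 * X2 ^ 2 = (c * y + L22 * X2) * X2 by ring,
        show L11 * y ^ 2 + c * X2 * y = (L11 * y + c * X2) * y by ring]
    simp only [effPower, eff, powerOut, powerIn, fluxJ1, fluxJ2, ← hc]
    ring
  -- derivative computation
  have h1 : HasDerivAt (fun y : ℝ => L11 * y ^ 2 + c * X2 * y)
      (2 * L11 * X1 + c * X2) X1 := by
    have := ((hasDerivAt_pow 2 X1).const_mul L11).fun_add ((hasDerivAt_id X1).const_mul (c * X2))
    simpa using this.congr_deriv (by ring)
  have hn : HasDerivAt (fun y : ℝ => T * (L11 * y ^ 2 + c * X2 * y) ^ 2)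
      (T * (2 * (L11 * X1 ^ 2 + c * X2 * X1) * (2 * L11 * X1 + c * X2))) X1 := by
    have := (h1.pow 2).const_mul T
    simpa using this.congr_deriv (by ring)
  have hd : HasDerivAt (fun y : ℝ => c * X2 * y + L22 * X2 ^ 2) (c * X2) X1 := by
    have := ((hasDerivAt_id X1).const_mul (c * X2)).add_const (L22 * X2 ^ 2)
    simpa using this
  have hf := hn.fun_div hd hD0
  have hder' := hf.deriv
  rw [← hEq, hder] at hder'
  have hkey : T * (2 * (L11 * X1 ^ 2 + c * X2 * X1) * (2 * L11 * X1 + c * X2))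
      * (c * X2 * X1 + L22 * X2 ^ 2)
      - T * (L11 * X1 ^ 2 + c * X2 * X1) ^ 2 * (c * X2) = 0 := by
    have := hder'.symm
    rw [div_eq_zero_iff] at this
    exact this.resolve_right (pow_ne_zero 2 hD0)
  -- algebra
  have hN0' : L11 * X1 ^ 2 + c * X2 * X1 ≠ 0 := by
    intro h; apply hN0
    simp only [fluxJ1, ← hc]; nlinarith [h]
  simp only [fluxJ1, eff, fluxJ2, ← hc] at heta ⊢
  rw [show (c * X1 + L22 * X2) * X2 = c * X2 * X1 + L22 * X2 ^ 2 by ring] at heta ⊢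
  have heta' : 2 + -((L11 * X1 + c * X2) * X1) / (c * X2 * X1 + L22 * X2 ^ 2) ≠ 0 := heta
  field_simp at heta'
  have heta2 : 2 * (c * X2 * X1 + L22 * X2 ^ 2) + -((L11 * X1 + c * X2) * X1) ≠ 0 := by
    intro h; apply heta; rw [add_div' _ _ _ hD0, h, zero_div]
  rw [add_div' _ _ _ hD0, sub_div' hD0, div_div_div_cancel_right₀ hD0, neg_mul, div_mul_eq_mul_div, eq_neg_iff_add_eq_zero, add_div' _ _ _ heta2, div_eq_zero_iff]
  left
  have hkey2 : 2 * (L11 * X1 ^ 2 + c * X2 * X1) * (2 * L11 * X1 + c * X2)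
      * (c * X2 * X1 + L22 * X2 ^ 2)
      = (L11 * X1 ^ 2 + c * X2 * X1) ^ 2 * (c * X2) := by
    have h := hkey
    nlinarith [h]
  -- cancel the nonzero factor
  have hkey3 : 2 * (2 * L11 * X1 + c * X2) * (c * X2 * X1 + L22 * X2 ^ 2)
      = (L11 * X1 ^ 2 + c * X2 * X1) * (c * X2) := by
    apply mul_left_cancel₀ hN0'
    linear_combination hkey2
  linear_combination hkey3
end

section
/- (MPη-Corollary) Assume 0 < q < 1, X₂ > 0, the force ratio x = √(L₁₁/L₂₂)·X₁/X₂ satisfies −1 < x < 0, and the driven flux satisfies J₁ = −((2 − η)/(2 + η))·L₁₁·X₁ where η = −(J₁·X₁)/(J₂·X₂). Then x = −(4 + q² − √(16 − 16·q² + q⁴))/(6·q). -/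
set_option maxHeartbeats 1000000 in
/-- (MPη-Corollary) If `0 < q < 1`, `X₂ > 0`, the force ratio `x = √(L₁₁/L₂₂)·X₁/X₂`
satisfies `−1 < x < 0`, and the driven flux satisfies `J₁ = −((2 − η)/(2 + η))·L₁₁·X₁`,
then `x = −(4 + q² − √(16 − 16·q² + q⁴))/(6·q)`. -/
theorem MPeta_corollary (L11 L22 q X1 X2 : ℝ) (hL11 : 0 < L11) (hL22 : 0 < L22)
    (hq0 : 0 < q) (hq1 : q < 1) (hX2 : 0 < X2)
    (hx1 : -1 < Real.sqrt (L11 / L22) * X1 / X2)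
    (hx2 : Real.sqrt (L11 / L22) * X1 / X2 < 0)
    (hJ1 : fluxJ1 L11 L22 q X2 X1 =
      -((2 - eff L11 L22 q X2 X1) / (2 + eff L11 L22 q X2 X1)) * (L11 * X1)) :
    Real.sqrt (L11 / L22) * X1 / X2 =
      -(4 + q ^ 2 - Real.sqrt (16 - 16 * q ^ 2 + q ^ 4)) / (6 * q) := by
  have hs2 : Real.sqrt (L11 / L22) ^ 2 = L11 / L22 := Real.sq_sqrt (by positivity)
  have hspos : 0 < Real.sqrt (L11 / L22) := Real.sqrt_pos.2 (by positivity)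
  set s := Real.sqrt (L11 / L22) with hsdef
  have hM : Real.sqrt (L11 * L22) = L22 * s := by
    rw [show L11 * L22 = L22 ^ 2 * (L11 / L22) by field_simp,
      Real.sqrt_mul (by positivity), Real.sqrt_sq hL22.le]
  set x := s * X1 / X2 with hxdef
  have hX1s : s * X1 = x * X2 := by rw [hxdef, div_mul_cancel₀ _ hX2.ne']
  have hL11e : L11 = s ^ 2 * L22 := by rw [hs2]; field_simp
  have hJ1e : fluxJ1 L11 L22 q X2 X1 = L22 * s * X2 * (x + q) := by
    rw [fluxJ1, hM, hL11e]; linear_combination (L22 * s) * hX1s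
  have hJ2e : fluxJ2 L11 L22 q X2 X1 = L22 * X2 * (q * x + 1) := by
    rw [fluxJ2, hM]; linear_combination (L22 * q) * hX1s
  have hden : 0 < q * x + 1 := by nlinarith
  have heta : eff L11 L22 q X2 X1 = -x * (x + q) / (q * x + 1) := by
    rw [eff, hJ1e, hJ2e]
    rw [show L22 * s * X2 * (x + q) * X1 = L22 * X2 * (x + q) * (s * X1) by ring, hX1s]
    field_simp
  set e := eff L11 L22 q X2 X1 with hedef
  have hetaB : e * (q * x + 1) = -x * (x + q) := by
    rw [heta]; exact div_mul_cancel₀ _ hden.ne'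
  have hL11X1 : L11 * X1 = L22 * s * X2 * x := by
    rw [hL11e]; linear_combination (s * L22) * hX1s
  have hc : L22 * s * X2 ≠ 0 := by positivity
  have hkey : x + q = -((2 - e) / (2 + e)) * x := by
    have h := hJ1
    rw [hJ1e, hL11X1] at h
    exact mul_left_cancel₀ hc (by linear_combination h)
  have h2e : 2 + e ≠ 0 := by
    intro h
    rw [h, div_zero, neg_zero, zero_mul] at hkey
    have he0 : e = 0 := by
      have h' : e * (q * x + 1) = 0 := by rw [hetaB, hkey]; ring
      rcases mul_eq_zero.1 h' with h'' | h''
      · exact h''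
      · exact absurd h'' (ne_of_gt hden)
    rw [he0] at h; norm_num at h
  have hkey2 : (x + q) * (2 + e) = -(2 - e) * x := by
    rw [hkey]; field_simp
  have hpoly : 3 * q * x ^ 2 + (4 + q ^ 2) * x + 2 * q = 0 := by
    linear_combination (q * x + 1) * hkey2 - q * hetaB
  set D := Real.sqrt (16 - 16 * q ^ 2 + q ^ 4) with hDdef
  have hDnn : (0:ℝ) < 16 - 16 * q ^ 2 + q ^ 4 := by nlinarith
  have hD2 : D ^ 2 = 16 - 16 * q ^ 2 + q ^ 4 := Real.sq_sqrt hDnn.le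
  have hDpos : 0 < D := Real.sqrt_pos.2 hDnn
  have hfac : (6 * q * x + (4 + q ^ 2) - D) * (6 * q * x + (4 + q ^ 2) + D) = 0 := by
    linear_combination 12 * q * hpoly - hD2
  have hDgt : 6 * q - 4 - q ^ 2 < D := by
    have hsq : (6 * q - 4 - q ^ 2) ^ 2 < D ^ 2 := by
      rw [hD2]; nlinarith [mul_pos (mul_pos hq0 (sub_pos.2 hq1)) (show (0:ℝ) < 4 - q by linarith)]
    rcases le_or_gt (6 * q - 4 - q ^ 2) 0 with h | h
    · linarith
    · nlinarith
  have hsecond : 0 < 6 * q * x + (4 + q ^ 2) + D := by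
    have h1 : 0 < 6 * q * (x + 1) := by
      have : 0 < x + 1 := by linarith
      positivity
    nlinarith
  have hfirst : 6 * q * x + (4 + q ^ 2) - D = 0 := by
    rcases mul_eq_zero.1 hfac with h | h
    · exact h
    · exact absurd h (ne_of_gt hsecond)
  field_simp
  linarith
end

section
/- (Maximum efficiency value) Let 0 < q < 1 and consider the efficiency η(x) = −x(x + q)/(q·x + 1) on the interval −1 < x < 0. Then η attains its maximum on this interval exactly at x = −q/(1 + √(1 − q²)), and the maximum value is η_M = q²/(1 + √(1 − q²))². -/
/-- Reduced efficiency `η(x) = −x(x + q)/(q·x + 1)`. -/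
noncomputable def effX (q x : ℝ) : ℝ := -(x * (x + q)) / (q * x + 1)

/-- Optimal force ratio for maximum efficiency: `x_Mη = −q/(1 + √(1 − q²))`. -/
noncomputable def xMeta (q : ℝ) : ℝ := -q / (1 + Real.sqrt (1 - q ^ 2))

/-- (Maximum efficiency value) For `0 < q < 1`, the efficiency `η(x) = −x(x + q)/(q·x + 1)`
on the interval `−1 < x < 0` attains its maximum exactly at `x_Mη = −q/(1 + √(1 − q²))`,
and the maximum value is `η_M = q²/(1 + √(1 − q²))²`. -/
theorem maximum_efficiency (q : ℝ) (hq0 : 0 < q) (hq1 : q < 1) :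
    xMeta q ∈ Set.Ioo (-1 : ℝ) 0 ∧
    (∀ x ∈ Set.Ioo (-1 : ℝ) 0, x ≠ xMeta q → effX q x < effX q (xMeta q)) ∧
    effX q (xMeta q) = q ^ 2 / (1 + Real.sqrt (1 - q ^ 2)) ^ 2 := by
  set s := Real.sqrt (1 - q ^ 2) with hs
  have hq2 : 0 < 1 - q ^ 2 := by nlinarith
  have hs2 : s ^ 2 = 1 - q ^ 2 := Real.sq_sqrt hq2.le
  have hs0 : 0 < s := Real.sqrt_pos.mpr hq2
  have h1s : (0:ℝ) < 1 + s := by linarith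
  have h1s' : (1:ℝ) + s ≠ 0 := h1s.ne'
  have hx : xMeta q = -q / (1 + s) := rfl
  have hmem : xMeta q ∈ Set.Ioo (-1:ℝ) 0 := by
    constructor
    · rw [hx, lt_div_iff₀ h1s]
      nlinarith
    · rw [hx]
      exact div_neg_of_neg_of_pos (by linarith) h1s
  have hden : q * xMeta q + 1 = s := by
    rw [hx]
    field_simp
    nlinarith [hs2]
  have hval : effX q (xMeta q) = q ^ 2 / (1 + s) ^ 2 := by
    unfold effX
    rw [hden, hx]
    have hsne : s ≠ 0 := hs0.ne'
    field_simp
    ring_nf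
  refine ⟨hmem, ?_, hval⟩
  intro x hx' hne
  rw [hval]
  unfold effX
  have hdx : 0 < q * x + 1 := by nlinarith [hx'.1, hx'.2]
  rw [div_lt_div_iff₀ hdx (by positivity)]
  have hne' : (1 + s) * x + q ≠ 0 := by
    intro h
    apply hne
    rw [hx, eq_div_iff h1s']
    linarith
  have key : 0 < ((1 + s) * x + q) ^ 2 := pow_two_pos_of_ne_zero hne'
  have hid : q ^ 2 * (q * x + 1) - (-(x * (x + q))) * (1 + s) ^ 2
      = ((1 + s) * x + q) ^ 2 := by
    linear_combination (q * x) * hs2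
  linarith
end
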